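/- arXiv:1404.6911 — 2 statements merged into one kernel-verified Lean document; each statement's English description precedes it below -/
import Mathlib

section
/- For α ∈ (1,2) there exists a finite constant C such that for all z ≥ 0, Σ_{j=1}^∞ | ∫_j^{j+1} (1 - cos(xz))/x^{α+1} dx - (1 - cos(jz))/j^{α+1} | ≤ C · max(z^2, z^{1+α}). -/
open Real Set

-- derivative lemma
lemma my_hasDerivAt (α z x : ℝ) (hx : 0 < x) :
    HasDerivAt (fun x : ℝ => (1 - Real.cos (x * z)) / x ^ (α + 1))
      ((Real.sin (x * z) * z * x ^ (α + 1)
        - (1 - Real.cos (x * z)) * ((α + 1) * x ^ α)) / (x ^ (α + 1)) ^ 2) x := by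
  have hu : HasDerivAt (fun x : ℝ => 1 - Real.cos (x * z)) (Real.sin (x * z) * z) x := by
    have h1 : HasDerivAt (fun x : ℝ => x * z) z x := hasDerivAt_mul_const z
    have h2 := (h1.cos)
    have h3 : HasDerivAt (fun x : ℝ => 1 - Real.cos (x * z)) (0 - -Real.sin (x * z) * z) x :=
      (hasDerivAt_const x (1 : ℝ)).sub h2
    convert h3 using 1; ring
  have hv : HasDerivAt (fun x : ℝ => x ^ (α + 1)) ((α + 1) * x ^ α) x := by
    have := Real.hasDerivAt_rpow_const (x := x) (p := α + 1) (Or.inl hx.ne')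
    simpa using this
  have hvne : x ^ (α + 1) ≠ 0 := (Real.rpow_pos_of_pos hx _).ne'
  exact hu.div hv hvne

-- bound on derivative
lemma my_deriv_bound (α z x j : ℝ) (hα1 : 1 < α) (hα2 : α < 2) (hz : 0 ≤ z)
    (hj : 1 ≤ j) (hx1 : j ≤ x) :
    |(Real.sin (x * z) * z * x ^ (α + 1)
        - (1 - Real.cos (x * z)) * ((α + 1) * x ^ α)) / (x ^ (α + 1)) ^ 2|
      ≤ 3 * z ^ 2 * j ^ (-α) := by
  have hxpos : (0:ℝ) < x := lt_of_lt_of_le (by linarith) hx1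
  have hjpos : (0:ℝ) < j := by linarith
  have hxz : 0 ≤ x * z := mul_nonneg hxpos.le hz
  have hsin : |Real.sin (x * z)| ≤ x * z := (Real.abs_sin_le_abs).trans (by rw [abs_of_nonneg hxz])
  have hcos0 : 0 ≤ 1 - Real.cos (x * z) := by linarith [Real.cos_le_one (x * z)]
  have hcos : 1 - Real.cos (x * z) ≤ (x * z) ^ 2 / 2 := by
    linarith [Real.one_sub_sq_div_two_le_cos (x := x * z)]
  have hrp : ∀ p : ℝ, 0 < x ^ p := fun p => Real.rpow_pos_of_pos hxpos p
  have h3 : x ^ α * x = x ^ (α + 1) := by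
    rw [Real.rpow_add hxpos, Real.rpow_one]
  -- numerator bound
  have hnum : |Real.sin (x * z) * z * x ^ (α + 1)
        - (1 - Real.cos (x * z)) * ((α + 1) * x ^ α)|
      ≤ 3 * z ^ 2 * (x * x ^ (α + 1)) := by
    have h1 : |Real.sin (x * z) * z * x ^ (α + 1)| ≤ (x * z) * z * x ^ (α + 1) := by
      rw [abs_mul, abs_mul, abs_of_nonneg (hrp (α+1)).le, abs_of_nonneg hz]
      gcongr
    have h2 : |(1 - Real.cos (x * z)) * ((α + 1) * x ^ α)|
        ≤ ((x * z) ^ 2 / 2) * ((α + 1) * x ^ α) := by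
      rw [abs_of_nonneg (by positivity)]
      gcongr
    have h4 : ((x * z) ^ 2 / 2) * ((α + 1) * x ^ α) = ((α+1)/2) * (z^2 * (x * x ^ (α+1))) := by
      rw [← h3]; ring
    have h5 : (x * z) * z * x ^ (α + 1) = z^2 * (x * x ^ (α+1)) := by ring
    have hA : 0 ≤ z^2 * (x * x ^ (α+1)) := by positivity
    calc |Real.sin (x * z) * z * x ^ (α + 1)
        - (1 - Real.cos (x * z)) * ((α + 1) * x ^ α)|
        ≤ |Real.sin (x * z) * z * x ^ (α + 1)|
          + |(1 - Real.cos (x * z)) * ((α + 1) * x ^ α)| := abs_sub _ _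
      _ ≤ (x * z) * z * x ^ (α + 1) + ((x * z) ^ 2 / 2) * ((α + 1) * x ^ α) :=
          add_le_add h1 h2
      _ ≤ 3 * z ^ 2 * (x * x ^ (α + 1)) := by rw [h4, h5]; nlinarith [hA]
  have hmul : x ^ (-α) * (x ^ (α + 1)) ^ 2 = x * x ^ (α + 1) := by
    rw [sq, ← Real.rpow_add hxpos, ← Real.rpow_add hxpos,
      show -α + (α + 1 + (α + 1)) = 1 + (α + 1) by ring,
      Real.rpow_add hxpos, Real.rpow_one]
  have hsimp : x * x ^ (α + 1) / (x ^ (α + 1)) ^ 2 = x ^ (-α) :=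
    (div_eq_iff (by positivity : ((x ^ (α + 1)) ^ 2 : ℝ) ≠ 0)).2 hmul.symm
  have key : |(Real.sin (x * z) * z * x ^ (α + 1)
        - (1 - Real.cos (x * z)) * ((α + 1) * x ^ α)) / (x ^ (α + 1)) ^ 2|
      ≤ 3 * z ^ 2 * (x * x ^ (α + 1)) / (x ^ (α + 1)) ^ 2 := by
    rw [abs_div, abs_of_nonneg (by positivity : (0:ℝ) ≤ (x ^ (α + 1)) ^ 2)]
    gcongr
  refine key.trans ?_
  rw [mul_div_assoc, hsimp]
  have h1 : j ^ α ≤ x ^ α := Real.rpow_le_rpow hjpos.le hx1 (by linarith)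
  have hxj : x ^ (-α) ≤ j ^ (-α) := by
    rw [Real.rpow_neg hxpos.le, Real.rpow_neg hjpos.le]
    exact inv_anti₀ (Real.rpow_pos_of_pos hjpos α) h1
  exact mul_le_mul_of_nonneg_left hxj (by positivity)

lemma my_term_bound (α z j : ℝ) (hα1 : 1 < α) (hα2 : α < 2) (hz : 0 ≤ z) (hj : 1 ≤ j) :
    |(∫ x in j..(j + 1), (1 - Real.cos (x * z)) / x ^ (α + 1))
      - (1 - Real.cos (j * z)) / j ^ (α + 1)| ≤ 3 * z ^ 2 * j ^ (-α) := by
  set f : ℝ → ℝ := fun x => (1 - Real.cos (x * z)) / x ^ (α + 1) with hf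
  set C : ℝ := 3 * z ^ 2 * j ^ (-α) with hC
  have hCnn : 0 ≤ C := by
    have : (0:ℝ) < j ^ (-α) := Real.rpow_pos_of_pos (by linarith) _
    positivity
  -- Lipschitz-type bound on Icc j (j+1)
  have hlip : ∀ x ∈ Set.Icc j (j + 1), |f x - f j| ≤ C := by
    intro x hx
    have hle : |f x - f j| ≤ C * ‖x - j‖ := by
      refine Convex.norm_image_sub_le_of_norm_hasDerivWithin_le
        (f' := fun x => (Real.sin (x * z) * z * x ^ (α + 1)
          - (1 - Real.cos (x * z)) * ((α + 1) * x ^ α)) / (x ^ (α + 1)) ^ 2)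
        (fun y hy => (my_hasDerivAt α z y (by
          have := hy.1; linarith : (0:ℝ) < y)).hasDerivWithinAt)
        (fun y hy => my_deriv_bound α z y j hα1 hα2 hz hj hy.1)
        (convex_Icc _ _) (Set.left_mem_Icc.2 (by linarith)) hx
    have hnx : ‖x - j‖ ≤ 1 := by
      rw [Real.norm_eq_abs, abs_of_nonneg (by linarith [hx.1])]
      linarith [hx.2]
    calc |f x - f j| ≤ C * ‖x - j‖ := hle
      _ ≤ C * 1 := mul_le_mul_of_nonneg_left hnx hCnn
      _ = C := mul_one C
  -- integrability of f on [j, j+1]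
  have hcont : ContinuousOn f (Set.uIcc j (j + 1)) := by
    have huicc : Set.uIcc j (j + 1) = Set.Icc j (j + 1) := Set.uIcc_of_le (by linarith)
    rw [huicc]
    apply ContinuousOn.div
    · exact (Continuous.continuousOn (by continuity))
    · intro x hx
      exact (Real.continuousAt_rpow_const x (α + 1)
        (Or.inl (by linarith [hx.1] : x ≠ 0))).continuousWithinAt
    · intro x hx
      exact (Real.rpow_pos_of_pos (by linarith [hx.1]) _).ne'
  have hint : IntervalIntegrable f MeasureTheory.volume j (j + 1) :=
    hcont.intervalIntegrable
  have hsplit : (∫ x in j..(j + 1), f x) - f j = ∫ x in j..(j + 1), (f x - f j) := by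
    rw [intervalIntegral.integral_sub hint intervalIntegrable_const,
      intervalIntegral.integral_const]
    simp
  rw [hsplit]
  have := intervalIntegral.norm_integral_le_of_norm_le_const
    (a := j) (b := j + 1) (C := C) (f := fun x => f x - f j) ?_
  · calc |∫ x in j..(j + 1), (f x - f j)| ≤ C * |(j + 1) - j| := this
      _ = C := by simp
  · intro x hx
    have hx' : x ∈ Set.Icc j (j + 1) := by
      have := Set.uIoc_of_le (by linarith : j ≤ j + 1) ▸ hx
      exact ⟨le_of_lt this.1, this.2⟩
    exact hlip x hx'

theorem series_integral_comparison (α : ℝ) (hα : α ∈ Set.Ioo (1 : ℝ) 2) :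
    ∃ C : ℝ, 0 < C ∧ ∀ z : ℝ, 0 ≤ z →
      (∑' n : ℕ,
        |(∫ x in ((n : ℝ) + 1)..((n : ℝ) + 2), (1 - Real.cos (x * z)) / x ^ (α + 1))
          - (1 - Real.cos (((n : ℝ) + 1) * z)) / ((n : ℝ) + 1) ^ (α + 1)|)
        ≤ C * max (z ^ 2) (z ^ (1 + α)) := by
  obtain ⟨hα1, hα2⟩ := hα
  -- summability of (n+1)^(-α)
  have hS : Summable (fun n : ℕ => ((n : ℝ) + 1) ^ (-α)) := by
    have h0 : Summable (fun n : ℕ => ((n : ℝ) ^ α)⁻¹) :=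
      Real.summable_nat_rpow_inv.2 hα1
    have h1 : Summable (fun n : ℕ => (((n + 1 : ℕ) : ℝ) ^ α)⁻¹) :=
      (summable_nat_add_iff 1).2 h0
    refine h1.congr fun n => ?_
    push_cast
    rw [Real.rpow_neg (by positivity : (0:ℝ) ≤ (n : ℝ) + 1)]
  set S : ℝ := ∑' n : ℕ, ((n : ℝ) + 1) ^ (-α) with hSdef
  have hSnn : 0 ≤ S := tsum_nonneg fun n => (Real.rpow_pos_of_pos (by positivity) _).le
  refine ⟨3 * S + 1, by positivity, fun z hz => ?_⟩
  have hterm : ∀ n : ℕ,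
      |(∫ x in ((n : ℝ) + 1)..((n : ℝ) + 2), (1 - Real.cos (x * z)) / x ^ (α + 1))
        - (1 - Real.cos (((n : ℝ) + 1) * z)) / ((n : ℝ) + 1) ^ (α + 1)|
      ≤ 3 * z ^ 2 * ((n : ℝ) + 1) ^ (-α) := by
    intro n
    have h2 : ((n : ℝ) + 2) = ((n : ℝ) + 1) + 1 := by ring
    rw [h2]
    exact my_term_bound α z ((n : ℝ) + 1) hα1 hα2 hz
      (le_add_of_nonneg_left (Nat.cast_nonneg n))
  have hRHS : Summable (fun n : ℕ => 3 * z ^ 2 * ((n : ℝ) + 1) ^ (-α)) :=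
    (hS.mul_left _)
  have hLHS : Summable (fun n : ℕ =>
      |(∫ x in ((n : ℝ) + 1)..((n : ℝ) + 2), (1 - Real.cos (x * z)) / x ^ (α + 1))
        - (1 - Real.cos (((n : ℝ) + 1) * z)) / ((n : ℝ) + 1) ^ (α + 1)|) :=
    Summable.of_nonneg_of_le (fun n => abs_nonneg _) hterm hRHS
  have hsum : (∑' n : ℕ,
      |(∫ x in ((n : ℝ) + 1)..((n : ℝ) + 2), (1 - Real.cos (x * z)) / x ^ (α + 1))
        - (1 - Real.cos (((n : ℝ) + 1) * z)) / ((n : ℝ) + 1) ^ (α + 1)|)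
      ≤ ∑' n : ℕ, 3 * z ^ 2 * ((n : ℝ) + 1) ^ (-α) :=
    Summable.tsum_le_tsum hterm hLHS hRHS
  have htsum : (∑' n : ℕ, 3 * z ^ 2 * ((n : ℝ) + 1) ^ (-α)) = 3 * z ^ 2 * S := by
    rw [tsum_mul_left]
  have hmax : z ^ 2 ≤ max (z ^ 2) (z ^ (1 + α)) := le_max_left _ _
  have hmaxnn : 0 ≤ max (z ^ 2) (z ^ (1 + α)) := le_trans (sq_nonneg z) hmax
  calc (∑' n : ℕ,
      |(∫ x in ((n : ℝ) + 1)..((n : ℝ) + 2), (1 - Real.cos (x * z)) / x ^ (α + 1))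
        - (1 - Real.cos (((n : ℝ) + 1) * z)) / ((n : ℝ) + 1) ^ (α + 1)|)
      ≤ 3 * z ^ 2 * S := by rw [← htsum]; exact hsum
    _ = (3 * S) * z ^ 2 := by ring
    _ ≤ (3 * S) * max (z ^ 2) (z ^ (1 + α)) :=
        mul_le_mul_of_nonneg_left hmax (by positivity)
    _ ≤ (3 * S + 1) * max (z ^ 2) (z ^ (1 + α)) := by nlinarith [hmaxnn]
end

section
/- For α ∈ (1,2] there exists a constant C (depending only on α) such that for all h ∈ ℝ with 0 < |h| ≤ 1, ∫_0^∞ min(1, |h|·ζ)^2 / (1 + ζ^α) dζ ≤ C·|h|^{α-1}. -/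
open MeasureTheory Set Real

theorem spatial_modulus_integral (α : ℝ) (hα : α ∈ Set.Ioc (1 : ℝ) 2) :
    ∃ C : ℝ, 0 < C ∧ ∀ h : ℝ, 0 < |h| → |h| ≤ 1 →
      (∫ ζ in Set.Ioi (0 : ℝ), (min 1 (|h| * ζ)) ^ 2 / (1 + ζ ^ α))
        ≤ C * |h| ^ (α - 1) := by
  obtain ⟨hα1, hα2⟩ := hα
  have h3 : (0:ℝ) < 3 - α := by linarith
  have h1 : (0:ℝ) < α - 1 := by linarith
  refine ⟨1/(3-α) + 1/(α-1), by positivity, ?_⟩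
  intro h hh hh1
  set r := |h| with hr
  have hr0 : 0 < r := hh
  set M := r⁻¹ with hM
  have hM0 : 0 < M := inv_pos.mpr hr0
  set f : ℝ → ℝ := fun ζ => (min 1 (r * ζ)) ^ 2 / (1 + ζ ^ α) with hf
  have hf_meas : Measurable f := by unfold f; fun_prop
  have denom_pos : ∀ ζ : ℝ, 0 ≤ ζ → (1:ℝ) ≤ 1 + ζ ^ α := fun ζ hζ => by
    nlinarith [Real.rpow_nonneg hζ α]
  have hf_nonneg : ∀ ζ : ℝ, 0 ≤ ζ → 0 ≤ f ζ := fun ζ hζ =>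
    div_nonneg (sq_nonneg _) (by linarith [denom_pos ζ hζ])
  have hmin1 : ∀ ζ : ℝ, min 1 (r * ζ) ≤ 1 := fun ζ => min_le_left _ _
  have hmin0 : ∀ ζ : ℝ, 0 ≤ ζ → 0 ≤ min 1 (r * ζ) := fun ζ hζ =>
    le_min one_pos.le (mul_nonneg hr0.le hζ)
  -- integrability on Ioc 0 M
  have hint1 : IntegrableOn f (Ioc 0 M) := by
    apply Integrable.mono' (g := fun _ => (1:ℝ))
      (integrableOn_const measure_Ioc_lt_top.ne) hf_meas.aestronglyMeasurable
    filter_upwards [ae_restrict_mem measurableSet_Ioc] with ζ hζ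
    rw [Real.norm_eq_abs, abs_of_nonneg (hf_nonneg ζ hζ.1.le)]
    rw [div_le_one (by linarith [denom_pos ζ hζ.1.le])]
    nlinarith [denom_pos ζ hζ.1.le, hmin1 ζ, hmin0 ζ hζ.1.le]
  -- integrability on Ioi M
  have hintpow : IntegrableOn (fun ζ : ℝ => ζ ^ (-α)) (Ioi M) :=
    integrableOn_Ioi_rpow_of_lt (by linarith) hM0
  have hbound2 : ∀ ζ ∈ Ioi M, f ζ ≤ ζ ^ (-α) := by
    intro ζ hζ
    have hζ0 : 0 < ζ := hM0.trans hζ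
    have hpow : 0 < ζ ^ α := Real.rpow_pos_of_pos hζ0 α
    rw [Real.rpow_neg hζ0.le]
    calc f ζ ≤ 1 / (1 + ζ ^ α) := by
          apply div_le_div_of_nonneg_right ?_ (by linarith)
          · nlinarith [hmin1 ζ, hmin0 ζ hζ0.le]
      _ ≤ 1 / ζ ^ α := by
          apply one_div_le_one_div_of_le hpow; linarith
      _ = (ζ ^ α)⁻¹ := one_div _
  have hint2 : IntegrableOn f (Ioi M) := by
    apply Integrable.mono' hintpow hf_meas.aestronglyMeasurable
    filter_upwards [ae_restrict_mem measurableSet_Ioi] with ζ hζ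
    rw [Real.norm_eq_abs, abs_of_nonneg (hf_nonneg ζ (hM0.trans hζ).le)]
    exact hbound2 ζ hζ
  -- split the integral
  have hsplit : (∫ ζ in Ioi (0:ℝ), f ζ) = (∫ ζ in Ioc 0 M, f ζ) + ∫ ζ in Ioi M, f ζ := by
    rw [← setIntegral_union (Ioc_disjoint_Ioi le_rfl) measurableSet_Ioi hint1 hint2,
      Ioc_union_Ioi_eq_Ioi hM0.le]
  -- first piece
  have hb1 : (∫ ζ in Ioc 0 M, f ζ) ≤ ∫ ζ in Ioc 0 M, r ^ 2 * ζ ^ (2 - α) := by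
    apply setIntegral_mono_on hint1 ?_ measurableSet_Ioc
    · intro ζ hζ
      have hζ0 : 0 < ζ := hζ.1
      have hpow : 0 < ζ ^ α := Real.rpow_pos_of_pos hζ0 α
      have key : r ^ 2 * ζ ^ (2 - α) = (r * ζ) ^ 2 / ζ ^ α := by
        rw [show (2 - α) = 2 + (-α) by ring, Real.rpow_add hζ0, Real.rpow_neg hζ0.le,
          Real.rpow_two, mul_pow]
        field_simp
      rw [key]
      calc f ζ ≤ (r * ζ) ^ 2 / (1 + ζ ^ α) := by
            apply div_le_div_of_nonneg_right ?_ (by linarith)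
            have := hmin0 ζ hζ0.le
            have h2 : min 1 (r * ζ) ≤ r * ζ := min_le_right _ _
            nlinarith
        _ ≤ (r * ζ) ^ 2 / ζ ^ α := by
            apply div_le_div_of_nonneg_left (by positivity) hpow (by linarith)
    · apply Integrable.const_mul
      have : IntegrableOn (fun ζ : ℝ => ζ ^ (2 - α)) (Ioc 0 M) := by
        rw [← intervalIntegrable_iff_integrableOn_Ioc_of_le hM0.le]
        apply intervalIntegral.intervalIntegrable_rpow'
        linarith
      exact this
  have hval1 : (∫ ζ in Ioc 0 M, r ^ 2 * ζ ^ (2 - α)) = r ^ (α - 1) / (3 - α) := by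
    rw [integral_const_mul, ← intervalIntegral.integral_of_le hM0.le,
      integral_rpow (Or.inl (by linarith))]
    rw [Real.zero_rpow (by linarith : (2 - α) + 1 ≠ 0), sub_zero]
    rw [hM, Real.inv_rpow hr0.le, ← Real.rpow_neg hr0.le]
    rw [show -(2 - α + 1) = (α - 3) by ring, show (2 - α + 1) = 3 - α by ring,
      mul_div_assoc']
    congr 1
    rw [← Real.rpow_natCast r 2, ← Real.rpow_add hr0]
    congr 1
    push_cast
    ring
  -- second piece
  have hb2 : (∫ ζ in Ioi M, f ζ) ≤ ∫ ζ in Ioi M, ζ ^ (-α) :=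
    setIntegral_mono_on hint2 hintpow measurableSet_Ioi hbound2
  have hval2 : (∫ ζ in Ioi M, ζ ^ (-α)) = r ^ (α - 1) / (α - 1) := by
    rw [integral_Ioi_rpow_of_lt (by linarith) hM0]
    rw [hM, Real.inv_rpow hr0.le, ← Real.rpow_neg hr0.le]
    rw [show -(-α + 1) = α - 1 by ring, show (-α + 1) = -(α - 1) by ring,
      neg_div_neg_eq]
  calc (∫ ζ in Ioi (0:ℝ), f ζ) = (∫ ζ in Ioc 0 M, f ζ) + ∫ ζ in Ioi M, f ζ := hsplit
    _ ≤ r ^ (α - 1) / (3 - α) + r ^ (α - 1) / (α - 1) := by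
        rw [← hval1, ← hval2]; exact add_le_add hb1 hb2
    _ = (1/(3-α) + 1/(α-1)) * r ^ (α - 1) := by ring
end
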